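/- Let P be a finite stochastic matrix in canonical form with recurrent blocks R_1,…,R_m (each irreducible with unique stationary distribution g_i), transient block T, and transient-to-recurrent blocks S_1,…,S_m. Then the Cesàro limit of P has recurrent blocks R_{i,*} = 1 g_i^⊤ and transient-to-recurrent blocks S_{i,*} = (I - T)^{-1} S_i R_{i,*}, with the block corresponding to transient-to-transient transitions equal to zero. -/

import Mathlib

open Matrix Filter Finset

/-- A row-stochastic matrix: nonnegative entries and rows summing to 1. -/
def IsStochastic {n : Type*} [Fintype n] (P : Matrix n n ℝ) : Prop :=
  (∀ i j, 0 ≤ P i j) ∧ ∀ i, ∑ j, P i j = 1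

/-- `Pstar` is the Cesàro limit of the powers of `P`. -/
def CesaroLimit {n : Type*} [Fintype n] [DecidableEq n] (P Pstar : Matrix n n ℝ) : Prop :=
  Filter.Tendsto (fun H : ℕ => (H : ℝ)⁻¹ • ∑ i ∈ Finset.range H, P ^ i)
    Filter.atTop (nhds Pstar)

lemma aux_pow_nonneg {n : Type*} [Fintype n] [DecidableEq n] (R : Matrix n n ℝ)
    (h : ∀ i j, 0 ≤ R i j) (k : ℕ) : ∀ i j, 0 ≤ (R ^ k) i j := by
  induction k with
  | zero => intro i j; rw [pow_zero]; by_cases hij : i = j <;> simp [Matrix.one_apply, hij]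
  | succ k ih =>
      intro i j
      rw [pow_succ, Matrix.mul_apply]
      exact Finset.sum_nonneg fun z _ => mul_nonneg (ih i z) (h z j)

lemma aux_pow_rowsum {n : Type*} [Fintype n] [DecidableEq n] (R : Matrix n n ℝ)
    (h : ∀ i, ∑ j, R i j = 1) (k : ℕ) : ∀ i, ∑ j, (R ^ k) i j = 1 := by
  induction k with
  | zero => intro i; simp [pow_zero, Matrix.one_apply]
  | succ k ih =>
      intro i
      simp only [pow_succ, Matrix.mul_apply]
      rw [Finset.sum_comm]
      calc ∑ z, ∑ j, (R ^ k) i z * R z j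
          = ∑ z, (R ^ k) i z * ∑ j, R z j := by simp [Finset.mul_sum]
        _ = ∑ z, (R ^ k) i z := by simp [h]
        _ = 1 := ih i

/-- Uniqueness of the stationary distribution of an irreducible stochastic matrix. -/
lemma aux_stationary_unique {n : Type*} [Fintype n] [DecidableEq n]
    (R : Matrix n n ℝ) (hR0 : ∀ i j, 0 ≤ R i j) (hR1 : ∀ i, ∑ j, R i j = 1)
    (hirr : ∀ x y, ∃ k, 0 < (R ^ k) x y)
    (g v : n → ℝ)
    (hgs : ∑ x, g x = 1) (hgst : Matrix.vecMul g R = g)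
    (hvs : ∑ x, v x = 1) (hvst : Matrix.vecMul v R = v) :
    v = g := by
  have hvR : ∀ j, ∑ i, v i * R i j = v j := fun j => by
    have := congrFun hvst j
    simpa [Matrix.vecMul, dotProduct] using this
  have hgR : ∀ j, ∑ i, g i * R i j = g j := fun j => by
    have := congrFun hgst j
    simpa [Matrix.vecMul, dotProduct] using this
  set w : n → ℝ := fun x => v x - g x with hw
  have hwsum : ∑ x, w x = 0 := by simp [hw, Finset.sum_sub_distrib, hgs, hvs]
  have hwst : ∀ j, ∑ i, w i * R i j = w j := by
    intro j
    simp only [hw, sub_mul, Finset.sum_sub_distrib, hvR, hgR]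
  set p : n → ℝ := fun x => max (w x) 0 with hp
  have hp0 : ∀ x, 0 ≤ p x := fun x => le_max_right _ _
  have hpw : ∀ x, w x ≤ p x := fun x => le_max_left _ _
  have hle : ∀ j, p j ≤ ∑ i, p i * R i j := by
    intro j
    refine max_le ?_ (Finset.sum_nonneg fun i _ => mul_nonneg (hp0 i) (hR0 i j))
    rw [← hwst j]
    exact Finset.sum_le_sum fun i _ => mul_le_mul_of_nonneg_right (hpw i) (hR0 i j)
  have hsum_eq : ∑ j, p j = ∑ j, ∑ i, p i * R i j := by
    rw [Finset.sum_comm]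
    simp [← Finset.mul_sum, hR1]
  have hpst : ∀ j, ∑ i, p i * R i j = p j := by
    intro j
    exact (((Finset.sum_eq_sum_iff_of_le (fun j _ => hle j)).mp hsum_eq) j
      (Finset.mem_univ j)).symm
  have hpstk : ∀ k j, ∑ i, p i * (R ^ k) i j = p j := by
    intro k
    induction k with
    | zero =>
        intro j
        simp [pow_zero, Matrix.one_apply, mul_ite]
    | succ k ih =>
        intro j
        simp only [pow_succ, Matrix.mul_apply, Finset.mul_sum]
        rw [Finset.sum_comm]
        calc ∑ z, ∑ i, p i * ((R ^ k) i z * R z j)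
            = ∑ z, (∑ i, p i * (R ^ k) i z) * R z j := by
              refine Finset.sum_congr rfl fun z _ => ?_
              rw [Finset.sum_mul]
              exact Finset.sum_congr rfl fun i _ => (mul_assoc _ _ _).symm
          _ = ∑ z, p z * R z j := by simp [ih]
          _ = p j := hpst j
  have hwle : ∀ x, w x ≤ 0 := by
    by_contra hcon
    push_neg at hcon
    obtain ⟨x, hx⟩ := hcon
    have hpx : 0 < p x := lt_of_lt_of_le hx (hpw x)
    have hwpos : ∀ y, 0 < w y := by
      intro y
      obtain ⟨k, hk⟩ := hirr x y
      have h1 : p x * (R ^ k) x y ≤ ∑ i, p i * (R ^ k) i y :=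
        Finset.single_le_sum
          (fun i _ => mul_nonneg (hp0 i) (aux_pow_nonneg R hR0 k i y))
          (Finset.mem_univ x)
      rw [hpstk k y] at h1
      have hpy : 0 < p y := lt_of_lt_of_le (mul_pos hpx hk) h1
      by_contra hcy
      push_neg at hcy
      rw [hp] at hpy
      simp only [max_eq_right hcy] at hpy
      exact lt_irrefl 0 hpy
    have : Nonempty n := ⟨x⟩
    have hpos : 0 < ∑ y, w y := Finset.sum_pos (fun y _ => hwpos y) Finset.univ_nonempty
    rw [hwsum] at hpos
    exact lt_irrefl 0 hpos
  have hz : ∀ x ∈ Finset.univ, w x = 0 :=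
    (Finset.sum_eq_zero_iff_of_nonpos (fun i _ => hwle i)).mp hwsum
  funext x
  have := hz x (Finset.mem_univ x)
  rw [hw] at this
  simpa [sub_eq_zero] using this

lemma aux_smul_tendsto_zero {n' m' : Type*} [Fintype n'] [Fintype m']
    (M : ℕ → Matrix n' m' ℝ) (c : ℝ) (h : ∀ k a b, |M k a b| ≤ c) :
    Filter.Tendsto (fun H : ℕ => (H : ℝ)⁻¹ • M H) Filter.atTop (nhds 0) := by
  refine tendsto_pi_nhds.mpr fun a => ?_
  refine tendsto_pi_nhds.mpr fun b => ?_
  have h0 : Filter.Tendsto (fun H : ℕ => (H : ℝ)⁻¹ * c) Filter.atTop (nhds 0) := by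
    simpa using tendsto_inv_atTop_nhds_zero_nat.mul_const c
  have hb : ∀ H : ℕ, ‖((H : ℝ)⁻¹ • M H) a b‖ ≤ (H : ℝ)⁻¹ * c := by
    intro H
    rw [Matrix.smul_apply, smul_eq_mul, Real.norm_eq_abs, abs_mul, abs_inv, Nat.abs_cast]
    exact mul_le_mul_of_nonneg_left (h H a b) (by positivity)
  have := squeeze_zero_norm hb h0
  simpa using this

theorem cesaro_canonical_form {m : ℕ} {ρ : Fin m → Type*} {τ : Type*}
    [∀ i, Fintype (ρ i)] [∀ i, DecidableEq (ρ i)] [Fintype τ] [DecidableEq τ]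
    (P Pstar : Matrix ((Σ i, ρ i) ⊕ τ) ((Σ i, ρ i) ⊕ τ) ℝ)
    (hP : IsStochastic P) (hC : CesaroLimit P Pstar)
    -- block lower-triangular structure: recurrent classes are closed
    (hblock1 : ∀ (i j : Fin m) (x : ρ i) (y : ρ j), i ≠ j →
      P (Sum.inl ⟨i, x⟩) (Sum.inl ⟨j, y⟩) = 0)
    (hblock2 : ∀ (i : Fin m) (x : ρ i) (y : τ), P (Sum.inl ⟨i, x⟩) (Sum.inr y) = 0)
    -- each recurrent block is irreducible
    (hirr : ∀ (i : Fin m) (x y : ρ i), ∃ k : ℕ,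
      0 < ((Matrix.of fun a b => P (Sum.inl ⟨i, a⟩) (Sum.inl ⟨i, b⟩) :
        Matrix (ρ i) (ρ i) ℝ) ^ k) x y)
    -- the transient block has spectral radius < 1
    (hspecT : ∀ z ∈ spectrum ℂ
      ((Matrix.of fun a b => P (Sum.inr a) (Sum.inr b) : Matrix τ τ ℝ).map
        (algebraMap ℝ ℂ)), ‖z‖ < 1)
    -- `g i` is the (unique) stationary distribution of the `i`-th recurrent block
    (g : ∀ i, ρ i → ℝ)
    (hg_nonneg : ∀ i x, 0 ≤ g i x) (hg_sum : ∀ i, ∑ x, g i x = 1)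
    (hg_stat : ∀ i, Matrix.vecMul (g i)
      (Matrix.of fun a b => P (Sum.inl ⟨i, a⟩) (Sum.inl ⟨i, b⟩) : Matrix (ρ i) (ρ i) ℝ)
        = g i) :
    (∀ (i : Fin m) (x y : ρ i), Pstar (Sum.inl ⟨i, x⟩) (Sum.inl ⟨i, y⟩) = g i y) ∧
    (∀ x y : τ, Pstar (Sum.inr x) (Sum.inr y) = 0) ∧
    (∀ (i : Fin m) (x : τ) (y : ρ i),
      Pstar (Sum.inr x) (Sum.inl ⟨i, y⟩) =
        (((1 - (Matrix.of fun a b => P (Sum.inr a) (Sum.inr b) : Matrix τ τ ℝ))⁻¹ *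
          (Matrix.of fun (a : τ) (b : ρ i) => P (Sum.inr a) (Sum.inl ⟨i, b⟩)) *
          (Matrix.of fun (_ b : ρ i) => g i b)) x y)) := by
  obtain ⟨hP0, hP1⟩ := hP
  have hCt : Filter.Tendsto (fun H : ℕ => (H : ℝ)⁻¹ • ∑ k ∈ Finset.range H, P ^ k)
      Filter.atTop (nhds Pstar) := hC
  -- splitting sums over the state space
  have sumN : ∀ (f : ((Σ i, ρ i) ⊕ τ) → ℝ),
      ∑ z, f z = (∑ j, ∑ b, f (Sum.inl ⟨j, b⟩)) + ∑ b, f (Sum.inr b) := by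
    intro f
    rw [Fintype.sum_sum_type]
    congr 1
    rw [← Finset.univ_sigma_univ, Finset.sum_sigma]
  -- powers preserve the block structure
  have hpz : ∀ (k : ℕ) (i : Fin m) (x : ρ i) (z : (Σ i, ρ i) ⊕ τ),
      (∀ y : ρ i, z ≠ Sum.inl ⟨i, y⟩) → (P ^ k) (Sum.inl ⟨i, x⟩) z = 0 := by
    intro k
    induction k with
    | zero =>
        intro i x z hz
        rw [pow_zero]
        exact Matrix.one_apply_ne fun h => hz x h.symm
    | succ k ih =>
        intro i x z hz
        rw [pow_succ', Matrix.mul_apply]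
        apply Finset.sum_eq_zero
        rintro (⟨j, a⟩ | b) _
        · by_cases hji : j = i
          · subst hji
            rw [ih j a z hz, mul_zero]
          · rw [hblock1 i j x a fun h => hji h.symm, zero_mul]
        · rw [hblock2 i x b, zero_mul]
  -- entrywise Cesàro convergence
  have hent : ∀ a b, Filter.Tendsto
      (fun H : ℕ => (H : ℝ)⁻¹ * ∑ k ∈ Finset.range H, (P ^ k) a b)
      Filter.atTop (nhds (Pstar a b)) := by
    intro a b
    have h1 := tendsto_pi_nhds.mp (tendsto_pi_nhds.mp hCt a) b
    simpa [Matrix.smul_apply, Matrix.sum_apply, smul_eq_mul] using h1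
  -- Pstar vanishes outside a closed block
  have hPstar0 : ∀ (i : Fin m) (x : ρ i) (z : (Σ i, ρ i) ⊕ τ),
      (∀ y : ρ i, z ≠ Sum.inl ⟨i, y⟩) → Pstar (Sum.inl ⟨i, x⟩) z = 0 := by
    intro i x z hzn
    have hzero : ∀ H : ℕ, (H : ℝ)⁻¹ * ∑ k ∈ Finset.range H, (P ^ k) (Sum.inl ⟨i, x⟩) z = 0 := by
      intro H
      rw [Finset.sum_eq_zero fun k _ => hpz k i x z hzn, mul_zero]
    have h0 : Filter.Tendsto
        (fun H : ℕ => (H : ℝ)⁻¹ * ∑ k ∈ Finset.range H, (P ^ k) (Sum.inl ⟨i, x⟩) z)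
        Filter.atTop (nhds 0) := by
      refine Filter.Tendsto.congr (fun H => (hzero H).symm) tendsto_const_nhds
    exact tendsto_nhds_unique (hent _ _) h0
  -- nonnegativity of Pstar
  have hnn : ∀ a b, 0 ≤ Pstar a b := by
    intro a b
    refine ge_of_tendsto' (hent a b) fun H => ?_
    exact mul_nonneg (by positivity)
      (Finset.sum_nonneg fun k _ => aux_pow_nonneg P hP0 k a b)
  -- rows of Pstar sum to 1
  have hrowPstar : ∀ a, ∑ z, Pstar a z = 1 := by
    intro a
    have h1 : Filter.Tendsto
        (fun H : ℕ => ∑ z, (H : ℝ)⁻¹ * ∑ k ∈ Finset.range H, (P ^ k) a z)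
        Filter.atTop (nhds (∑ z, Pstar a z)) :=
      tendsto_finset_sum _ fun z _ => hent a z
    have h2 : ∀ H : ℕ, 1 ≤ H →
        ∑ z, (H : ℝ)⁻¹ * ∑ k ∈ Finset.range H, (P ^ k) a z = 1 := by
      intro H hH
      calc ∑ z, (H : ℝ)⁻¹ * ∑ k ∈ Finset.range H, (P ^ k) a z
          = (H : ℝ)⁻¹ * ∑ k ∈ Finset.range H, ∑ z, (P ^ k) a z := by
            rw [← Finset.mul_sum, Finset.sum_comm]
        _ = (H : ℝ)⁻¹ * H := by
            rw [Finset.sum_congr rfl fun k _ => aux_pow_rowsum P hP1 k a]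
            simp
        _ = 1 := by
            rw [inv_mul_cancel₀]
            exact_mod_cast Nat.cast_ne_zero.mpr (by omega)
    have h4 : (fun H : ℕ => ∑ z, (H : ℝ)⁻¹ * ∑ k ∈ Finset.range H, (P ^ k) a z)
        =ᶠ[Filter.atTop] fun _ => (1 : ℝ) :=
      Filter.eventually_atTop.mpr ⟨1, fun H hH => h2 H hH⟩
    exact tendsto_nhds_unique h1 (Filter.Tendsto.congr' h4.symm tendsto_const_nhds)
  -- entries of P^k are at most 1
  have hbnd : ∀ (k : ℕ) a b, (P ^ k) a b ≤ 1 := by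
    intro k a b
    calc (P ^ k) a b ≤ ∑ z, (P ^ k) a z :=
          Finset.single_le_sum (fun z _ => aux_pow_nonneg P hP0 k a z) (Finset.mem_univ b)
      _ = 1 := aux_pow_rowsum P hP1 k a
  -- the error term tends to zero
  have hkey1 : Filter.Tendsto (fun H : ℕ => (H : ℝ)⁻¹ • (P ^ H - 1))
      Filter.atTop (nhds 0) := by
    refine aux_smul_tendsto_zero _ 1 fun k a b => ?_
    have h1 := aux_pow_nonneg P hP0 k a b
    have h2 := hbnd k a b
    have h3 : (1 : Matrix ((Σ i, ρ i) ⊕ τ) ((Σ i, ρ i) ⊕ τ) ℝ) a b = 0 ∨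
        (1 : Matrix ((Σ i, ρ i) ⊕ τ) ((Σ i, ρ i) ⊕ τ) ℝ) a b = 1 := by
      by_cases hab : a = b <;> simp [Matrix.one_apply, hab]
    rw [Matrix.sub_apply, abs_le]
    rcases h3 with h | h <;> rw [h] <;> constructor <;> linarith
  -- geometric sum identity
  have hgeom : ∀ H : ℕ, (∑ k ∈ Finset.range H, P ^ k) * P
      = ∑ k ∈ Finset.range H, P ^ k + (P ^ H - 1) := by
    intro H
    have h := geom_sum_mul P H
    calc (∑ k ∈ Finset.range H, P ^ k) * P
        = (∑ k ∈ Finset.range H, P ^ k) * (P - 1) + ∑ k ∈ Finset.range H, P ^ k := by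
          noncomm_ring
      _ = ∑ k ∈ Finset.range H, P ^ k + (P ^ H - 1) := by rw [h, add_comm]
  -- Pstar * P = Pstar
  have hPsP : Pstar * P = Pstar := by
    have hAP : ∀ H : ℕ, ((H : ℝ)⁻¹ • ∑ k ∈ Finset.range H, P ^ k) * P
        = ((H : ℝ)⁻¹ • ∑ k ∈ Finset.range H, P ^ k) + (H : ℝ)⁻¹ • (P ^ H - 1) := by
      intro H
      rw [smul_mul_assoc, hgeom H, smul_add]
    have h1 : Filter.Tendsto
        (fun H : ℕ => ((H : ℝ)⁻¹ • ∑ k ∈ Finset.range H, P ^ k) * P)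
        Filter.atTop (nhds (Pstar * P)) := hCt.mul tendsto_const_nhds
    have h2 : Filter.Tendsto
        (fun H : ℕ => ((H : ℝ)⁻¹ • ∑ k ∈ Finset.range H, P ^ k) + (H : ℝ)⁻¹ • (P ^ H - 1))
        Filter.atTop (nhds (Pstar + 0)) := hCt.add hkey1
    rw [add_zero] at h2
    exact tendsto_nhds_unique (Filter.Tendsto.congr hAP h1) h2
  -- P * Pstar = Pstar
  have hPP : P * Pstar = Pstar := by
    have hcomm : ∀ H : ℕ, P * (∑ k ∈ Finset.range H, P ^ k)
        = (∑ k ∈ Finset.range H, P ^ k) * P := by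
      intro H
      rw [Finset.mul_sum, Finset.sum_mul]
      exact Finset.sum_congr rfl fun k _ => by rw [← pow_succ, ← pow_succ']
    have hAP : ∀ H : ℕ, P * ((H : ℝ)⁻¹ • ∑ k ∈ Finset.range H, P ^ k)
        = ((H : ℝ)⁻¹ • ∑ k ∈ Finset.range H, P ^ k) + (H : ℝ)⁻¹ • (P ^ H - 1) := by
      intro H
      rw [mul_smul_comm, hcomm H, hgeom H, smul_add]
    have h1 : Filter.Tendsto
        (fun H : ℕ => P * ((H : ℝ)⁻¹ • ∑ k ∈ Finset.range H, P ^ k))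
        Filter.atTop (nhds (P * Pstar)) := tendsto_const_nhds.mul hCt
    have h2 : Filter.Tendsto
        (fun H : ℕ => ((H : ℝ)⁻¹ • ∑ k ∈ Finset.range H, P ^ k) + (H : ℝ)⁻¹ • (P ^ H - 1))
        Filter.atTop (nhds (Pstar + 0)) := hCt.add hkey1
    rw [add_zero] at h2
    exact tendsto_nhds_unique (Filter.Tendsto.congr hAP h1) h2
  -- inequality of states in different blocks
  have hne : ∀ (j i : Fin m) (b : ρ j), j ≠ i → ∀ y' : ρ i,
      (Sum.inl ⟨j, b⟩ : (Σ i, ρ i) ⊕ τ) ≠ Sum.inl ⟨i, y'⟩ := by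
    intro j i b hj y' h'
    injection h' with h''
    exact hj (congrArg Sigma.fst h'')
  -- Part 1: recurrent blocks
  have hpart1 : ∀ (i : Fin m) (x y : ρ i),
      Pstar (Sum.inl ⟨i, x⟩) (Sum.inl ⟨i, y⟩) = g i y := by
    intro i x y
    have hR0 : ∀ a b, (0:ℝ) ≤ (Matrix.of fun a b => P (Sum.inl ⟨i, a⟩) (Sum.inl ⟨i, b⟩) :
        Matrix (ρ i) (ρ i) ℝ) a b := fun a b => hP0 _ _
    have hR1 : ∀ a, ∑ b, (Matrix.of fun a b => P (Sum.inl ⟨i, a⟩) (Sum.inl ⟨i, b⟩) :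
        Matrix (ρ i) (ρ i) ℝ) a b = 1 := by
      intro a
      have h := hP1 (Sum.inl ⟨i, a⟩)
      rw [sumN] at h
      rw [Finset.sum_eq_single_of_mem i (Finset.mem_univ i)
        (fun j _ hj => Finset.sum_eq_zero fun b _ =>
          hblock1 i j a b fun h' => hj h'.symm)] at h
      rw [Finset.sum_eq_zero fun b _ => hblock2 i a b, add_zero] at h
      simpa using h
    have hvs : ∑ b, Pstar (Sum.inl ⟨i, x⟩) (Sum.inl ⟨i, b⟩) = 1 := by
      have h := hrowPstar (Sum.inl ⟨i, x⟩)
      rw [sumN] at h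
      rw [Finset.sum_eq_single_of_mem i (Finset.mem_univ i)
        (fun j _ hj => Finset.sum_eq_zero fun b _ =>
          hPstar0 i x (Sum.inl ⟨j, b⟩) (hne j i b hj))] at h
      rw [Finset.sum_eq_zero (fun (b : τ) _ =>
        hPstar0 i x (Sum.inr b) (fun y' h' => by simp at h')), add_zero] at h
      exact h
    have hvst : Matrix.vecMul (fun b => Pstar (Sum.inl ⟨i, x⟩) (Sum.inl ⟨i, b⟩))
        (Matrix.of fun a b => P (Sum.inl ⟨i, a⟩) (Sum.inl ⟨i, b⟩) : Matrix (ρ i) (ρ i) ℝ)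
        = fun b => Pstar (Sum.inl ⟨i, x⟩) (Sum.inl ⟨i, b⟩) := by
      funext y'
      have h := congrFun (congrFun hPsP (Sum.inl ⟨i, x⟩)) (Sum.inl ⟨i, y'⟩)
      rw [Matrix.mul_apply] at h
      rw [sumN (fun z => Pstar (Sum.inl ⟨i, x⟩) z * P z (Sum.inl ⟨i, y'⟩))] at h
      rw [Finset.sum_eq_single_of_mem i (Finset.mem_univ i)
        (fun j _ hj => Finset.sum_eq_zero fun b _ => by
          rw [hPstar0 i x (Sum.inl ⟨j, b⟩) (hne j i b hj), zero_mul])] at h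
      rw [Finset.sum_eq_zero (fun (b : τ) _ => by
        rw [hPstar0 i x (Sum.inr b) (fun y'' h' => by simp at h'), zero_mul]),
        add_zero] at h
      simpa [Matrix.vecMul, dotProduct] using h
    have := aux_stationary_unique _ hR0 hR1 (hirr i) (g i)
      (fun b => Pstar (Sum.inl ⟨i, x⟩) (Sum.inl ⟨i, b⟩))
      (hg_sum i) (hg_stat i) hvs hvst
    exact congrFun this y
  -- transient powers
  have hTpow : ∀ (k : ℕ) (x y : τ), (P ^ k) (Sum.inr x) (Sum.inr y)
      = ((Matrix.of fun a b => P (Sum.inr a) (Sum.inr b) : Matrix τ τ ℝ) ^ k) x y := by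
    intro k
    induction k with
    | zero =>
        intro x y
        rw [pow_zero, pow_zero]
        by_cases h : x = y <;> simp [Matrix.one_apply, h]
    | succ k ih =>
        intro x y
        rw [pow_succ, pow_succ, Matrix.mul_apply, Matrix.mul_apply]
        rw [sumN (fun z => (P ^ k) (Sum.inr x) z * P z (Sum.inr y))]
        rw [Finset.sum_eq_zero (fun j _ => Finset.sum_eq_zero fun b _ => by
          rw [hblock2 j b y, mul_zero]), zero_add]
        exact Finset.sum_congr rfl fun b _ => by rw [ih x b]; rfl
  -- invertibility of 1 - T
  have hdet : IsUnit (1 - (Matrix.of fun a b => P (Sum.inr a) (Sum.inr b) :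
      Matrix τ τ ℝ)).det := by
    by_contra hdet
    have h0 : (1 - (Matrix.of fun a b => P (Sum.inr a) (Sum.inr b) :
        Matrix τ τ ℝ)).det = 0 := by
      by_contra h
      exact hdet (isUnit_iff_ne_zero.mpr h)
    have h1 : ((1 : Matrix τ τ ℂ) - (Matrix.of fun a b => P (Sum.inr a) (Sum.inr b) :
        Matrix τ τ ℝ).map (algebraMap ℝ ℂ)).det = 0 := by
      have h2 := (algebraMap ℝ ℂ).map_det
        (1 - (Matrix.of fun a b => P (Sum.inr a) (Sum.inr b) : Matrix τ τ ℝ))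
      rw [h0, map_zero] at h2
      have e : (algebraMap ℝ ℂ).mapMatrix
          (1 - (Matrix.of fun a b => P (Sum.inr a) (Sum.inr b) : Matrix τ τ ℝ))
          = (1 : Matrix τ τ ℂ) - (Matrix.of fun a b => P (Sum.inr a) (Sum.inr b) :
            Matrix τ τ ℝ).map (algebraMap ℝ ℂ) := by
        rw [map_sub, _root_.map_one, RingHom.mapMatrix_apply]
      rw [e] at h2
      exact h2.symm
    have h2 : (1 : ℂ) ∈ spectrum ℂ
        ((Matrix.of fun a b => P (Sum.inr a) (Sum.inr b) : Matrix τ τ ℝ).map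
          (algebraMap ℝ ℂ)) := by
      rw [spectrum.mem_iff, _root_.map_one]
      intro hu
      rw [Matrix.isUnit_iff_isUnit_det, h1] at hu
      simpa using hu
    have := hspecT 1 h2
    norm_num at this
  -- Part 2: transient-to-transient block is zero
  have hpart2 : ∀ x y : τ, Pstar (Sum.inr x) (Sum.inr y) = 0 := by
    have hZt : Filter.Tendsto (fun H : ℕ => (H : ℝ)⁻¹ • ∑ k ∈ Finset.range H,
        (Matrix.of fun a b => P (Sum.inr a) (Sum.inr b) : Matrix τ τ ℝ) ^ k)
        Filter.atTop
        (nhds (Matrix.of fun x y => Pstar (Sum.inr x) (Sum.inr y))) := by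
      refine tendsto_pi_nhds.mpr fun x => ?_
      refine tendsto_pi_nhds.mpr fun y => ?_
      have h1 := hent (Sum.inr x) (Sum.inr y)
      refine Filter.Tendsto.congr (fun H => ?_) h1
      simp only [Matrix.smul_apply, Matrix.sum_apply, smul_eq_mul, hTpow]
    have hbT : Filter.Tendsto (fun H : ℕ => (H : ℝ)⁻¹ •
        ((Matrix.of fun a b => P (Sum.inr a) (Sum.inr b) : Matrix τ τ ℝ) ^ H - 1))
        Filter.atTop (nhds 0) := by
      refine aux_smul_tendsto_zero _ 1 fun k a b => ?_
      have h1 : (0:ℝ) ≤ ((Matrix.of fun a b => P (Sum.inr a) (Sum.inr b) :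
          Matrix τ τ ℝ) ^ k) a b := by
        rw [← hTpow]
        exact aux_pow_nonneg P hP0 k _ _
      have h2 : ((Matrix.of fun a b => P (Sum.inr a) (Sum.inr b) :
          Matrix τ τ ℝ) ^ k) a b ≤ 1 := by
        rw [← hTpow]
        exact hbnd k _ _
      have h3 : (1 : Matrix τ τ ℝ) a b = 0 ∨ (1 : Matrix τ τ ℝ) a b = 1 := by
        by_cases hab : a = b <;> simp [Matrix.one_apply, hab]
      rw [Matrix.sub_apply, abs_le]
      rcases h3 with h | h <;> rw [h] <;> constructor <;> linarith
    have hge : ∀ H : ℕ, ((H : ℝ)⁻¹ • ∑ k ∈ Finset.range H,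
        (Matrix.of fun a b => P (Sum.inr a) (Sum.inr b) : Matrix τ τ ℝ) ^ k) *
        ((Matrix.of fun a b => P (Sum.inr a) (Sum.inr b) : Matrix τ τ ℝ) - 1)
        = (H : ℝ)⁻¹ •
          ((Matrix.of fun a b => P (Sum.inr a) (Sum.inr b) : Matrix τ τ ℝ) ^ H - 1) := by
      intro H
      rw [smul_mul_assoc, geom_sum_mul]
    have h1 : Filter.Tendsto (fun H : ℕ => ((H : ℝ)⁻¹ • ∑ k ∈ Finset.range H,
        (Matrix.of fun a b => P (Sum.inr a) (Sum.inr b) : Matrix τ τ ℝ) ^ k) *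
        ((Matrix.of fun a b => P (Sum.inr a) (Sum.inr b) : Matrix τ τ ℝ) - 1))
        Filter.atTop (nhds ((Matrix.of fun x y => Pstar (Sum.inr x) (Sum.inr y)) *
          ((Matrix.of fun a b => P (Sum.inr a) (Sum.inr b) : Matrix τ τ ℝ) - 1))) :=
      hZt.mul tendsto_const_nhds
    have h2 : (Matrix.of fun x y => Pstar (Sum.inr x) (Sum.inr y)) *
        ((Matrix.of fun a b => P (Sum.inr a) (Sum.inr b) : Matrix τ τ ℝ) - 1) = 0 :=
      tendsto_nhds_unique (Filter.Tendsto.congr hge h1) hbT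
    have h3 : (Matrix.of fun x y => Pstar (Sum.inr x) (Sum.inr y)) *
        (1 - (Matrix.of fun a b => P (Sum.inr a) (Sum.inr b) : Matrix τ τ ℝ)) = 0 := by
      rw [← neg_sub (Matrix.of fun a b => P (Sum.inr a) (Sum.inr b) : Matrix τ τ ℝ) 1,
        mul_neg, h2, neg_zero]
    have hZ_eq : (Matrix.of fun x y => Pstar (Sum.inr x) (Sum.inr y)) = 0 := by
      calc (Matrix.of fun x y => Pstar (Sum.inr x) (Sum.inr y))
          = (Matrix.of fun x y => Pstar (Sum.inr x) (Sum.inr y)) *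
            ((1 - (Matrix.of fun a b => P (Sum.inr a) (Sum.inr b) : Matrix τ τ ℝ)) *
             (1 - (Matrix.of fun a b => P (Sum.inr a) (Sum.inr b) : Matrix τ τ ℝ))⁻¹) := by
            rw [Matrix.mul_nonsing_inv _ hdet, mul_one]
        _ = ((Matrix.of fun x y => Pstar (Sum.inr x) (Sum.inr y)) *
            (1 - (Matrix.of fun a b => P (Sum.inr a) (Sum.inr b) : Matrix τ τ ℝ))) *
             (1 - (Matrix.of fun a b => P (Sum.inr a) (Sum.inr b) : Matrix τ τ ℝ))⁻¹ :=
            (mul_assoc _ _ _).symm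
        _ = 0 := by rw [h3, zero_mul]
    intro x y
    have := congrFun (congrFun hZ_eq x) y
    simpa using this
  refine ⟨hpart1, hpart2, ?_⟩
  -- Part 3: transient-to-recurrent blocks
  intro i x y
  have heq : (1 - (Matrix.of fun a b => P (Sum.inr a) (Sum.inr b) : Matrix τ τ ℝ)) *
      (Matrix.of fun a b => Pstar (Sum.inr a) (Sum.inl ⟨i, b⟩) : Matrix τ (ρ i) ℝ)
      = (Matrix.of fun (a : τ) (b : ρ i) => P (Sum.inr a) (Sum.inl ⟨i, b⟩)) *
        (Matrix.of fun (_ b : ρ i) => g i b) := by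
    ext a b
    rw [Matrix.sub_mul, Matrix.one_mul, Matrix.sub_apply]
    have h := congrFun (congrFun hPP (Sum.inr a)) (Sum.inl ⟨i, b⟩)
    rw [Matrix.mul_apply] at h
    rw [sumN (fun z => P (Sum.inr a) z * Pstar z (Sum.inl ⟨i, b⟩))] at h
    rw [Finset.sum_eq_single_of_mem i (Finset.mem_univ i)
      (fun j _ hj => Finset.sum_eq_zero fun c _ => by
        rw [hPstar0 j c (Sum.inl ⟨i, b⟩) (fun y' h' => by
          injection h' with h''
          exact hj (congrArg Sigma.fst h'').symm), mul_zero])] at h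
    have e1 : ∑ c, P (Sum.inr a) (Sum.inl ⟨i, c⟩) * Pstar (Sum.inl ⟨i, c⟩) (Sum.inl ⟨i, b⟩)
        = ((Matrix.of fun (a : τ) (b : ρ i) => P (Sum.inr a) (Sum.inl ⟨i, b⟩)) *
          (Matrix.of fun (_ b : ρ i) => g i b)) a b := by
      rw [Matrix.mul_apply]
      exact Finset.sum_congr rfl fun c _ => by rw [hpart1 i c b]; rfl
    have e2 : ∑ c, P (Sum.inr a) (Sum.inr c) * Pstar (Sum.inr c) (Sum.inl ⟨i, b⟩)
        = ((Matrix.of fun a b => P (Sum.inr a) (Sum.inr b) : Matrix τ τ ℝ) *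
          (Matrix.of fun a b => Pstar (Sum.inr a) (Sum.inl ⟨i, b⟩) : Matrix τ (ρ i) ℝ)) a b := by
      rw [Matrix.mul_apply]
      rfl
    rw [e1, e2] at h
    have : Pstar (Sum.inr a) (Sum.inl ⟨i, b⟩)
        = (Matrix.of fun a b => Pstar (Sum.inr a) (Sum.inl ⟨i, b⟩) : Matrix τ (ρ i) ℝ) a b := rfl
    linarith [h]
  have hfin : (Matrix.of fun a b => Pstar (Sum.inr a) (Sum.inl ⟨i, b⟩) : Matrix τ (ρ i) ℝ)
      = (1 - (Matrix.of fun a b => P (Sum.inr a) (Sum.inr b) : Matrix τ τ ℝ))⁻¹ *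
        ((Matrix.of fun (a : τ) (b : ρ i) => P (Sum.inr a) (Sum.inl ⟨i, b⟩)) *
         (Matrix.of fun (_ b : ρ i) => g i b)) := by
    calc (Matrix.of fun a b => Pstar (Sum.inr a) (Sum.inl ⟨i, b⟩) : Matrix τ (ρ i) ℝ)
        = ((1 - (Matrix.of fun a b => P (Sum.inr a) (Sum.inr b) : Matrix τ τ ℝ))⁻¹ *
           (1 - (Matrix.of fun a b => P (Sum.inr a) (Sum.inr b) : Matrix τ τ ℝ))) *
          (Matrix.of fun a b => Pstar (Sum.inr a) (Sum.inl ⟨i, b⟩) : Matrix τ (ρ i) ℝ) := by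
          rw [Matrix.nonsing_inv_mul _ hdet, Matrix.one_mul]
      _ = (1 - (Matrix.of fun a b => P (Sum.inr a) (Sum.inr b) : Matrix τ τ ℝ))⁻¹ *
          ((1 - (Matrix.of fun a b => P (Sum.inr a) (Sum.inr b) : Matrix τ τ ℝ)) *
           (Matrix.of fun a b => Pstar (Sum.inr a) (Sum.inl ⟨i, b⟩) : Matrix τ (ρ i) ℝ)) :=
          Matrix.mul_assoc _ _ _
      _ = _ := by rw [heq]
  have := congrFun (congrFun hfin x) y
  rw [Matrix.mul_assoc]
  exact this
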